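/- The Riccati update preserves positive semidefiniteness: if F is symmetric positive semidefinite, Q is symmetric positive semidefinite, and R is symmetric positive definite, then F' := Q + AᵀFA - AᵀFB(R + BᵀFB)⁻¹BᵀFA is symmetric positive semidefinite. -/

import Mathlib

open Matrix

theorem riccati_update_posSemidef
    {n m : ℕ}
    (A : Matrix (Fin n) (Fin n) ℝ) (B : Matrix (Fin n) (Fin m) ℝ)
    (Q F : Matrix (Fin n) (Fin n) ℝ) (hQ : Q.PosSemidef) (hF : F.PosSemidef)
    (R : Matrix (Fin m) (Fin m) ℝ) (hR : R.PosDef) :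
    (Q + Aᵀ * F * A - Aᵀ * F * B * (R + Bᵀ * F * B)⁻¹ * Bᵀ * F * A).PosSemidef := by
  have hS : (R + Bᵀ * F * B).PosDef := by
    have hBFB : (Bᵀ * F * B).PosSemidef := by
      simpa [conjTranspose_eq_transpose_of_trivial] using hF.conjTranspose_mul_mul_same B
    exact hR.add_posSemidef hBFB
  haveI : Invertible (R + Bᵀ * F * B) :=
    (R + Bᵀ * F * B).invertibleOfIsUnitDet hS.det_pos.ne'.isUnit
  have hFh : Fᵀ = F := hF.isHermitian
  -- block matrix is PSD
  have hblock : (fromBlocks (R + Bᵀ * F * B) (Bᵀ * F * A) (Aᵀ * F * B) (Aᵀ * F * A)).PosSemidef := by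
    have h1 : (fromBlocks R 0 0 (0 : Matrix (Fin n) (Fin n) ℝ)).PosSemidef := by
      have := hR.posSemidef.conjTranspose_mul_mul_same
        (fromCols (1 : Matrix (Fin m) (Fin m) ℝ) (0 : Matrix (Fin m) (Fin n) ℝ))
      simp only [conjTranspose_eq_transpose_of_trivial, transpose_fromCols, mul_fromCols,
        fromRows_mul, fromRows_mul_fromCols, transpose_one, transpose_zero, Matrix.mul_one, Matrix.mul_zero,
        Matrix.one_mul, Matrix.zero_mul] at this
      have heq : fromCols (fromRows R (0 : Matrix (Fin n) (Fin m) ℝ))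
          (0 : Matrix (Fin m ⊕ Fin n) (Fin n) ℝ) = fromBlocks R 0 0 0 := by
        ext (i | i) (j | j) <;>
          simp [fromCols, fromRows, fromBlocks] <;> rfl
      rwa [heq] at this
    have h2 : (fromBlocks (Bᵀ * (F * B)) (Bᵀ * (F * A)) (Aᵀ * (F * B)) (Aᵀ * (F * A))).PosSemidef := by
      have := hF.conjTranspose_mul_mul_same (fromCols B A)
      simpa [conjTranspose_eq_transpose_of_trivial, transpose_fromCols, mul_fromCols,
        fromRows_mul_fromCols, fromCols_fromRows_eq_fromBlocks, Matrix.mul_assoc] using this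
    have := h1.add h2
    simpa [fromBlocks_add, Matrix.mul_assoc] using this
  have hherm : (Bᵀ * F * A)ᴴ = Aᵀ * F * B := by
    rw [conjTranspose_eq_transpose_of_trivial, Matrix.transpose_mul, Matrix.transpose_mul,
      transpose_transpose, hFh, Matrix.mul_assoc]
  have key : (Aᵀ * F * A - Aᵀ * F * B * (R + Bᵀ * F * B)⁻¹ * (Bᵀ * F * A)).PosSemidef := by
    have := (Matrix.PosDef.fromBlocks₁₁ (Bᵀ * F * A) (Aᵀ * F * A) hS).mp
    rw [hherm] at this
    exact this hblock
  have this2 := hQ.add key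
  have hassoc : Aᵀ * F * B * (R + Bᵀ * F * B)⁻¹ * (Bᵀ * F * A)
      = Aᵀ * F * B * (R + Bᵀ * F * B)⁻¹ * Bᵀ * F * A := by
    simp [Matrix.mul_assoc]
  rw [hassoc, ← add_sub_assoc] at this2
  exact this2
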